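/- arXiv:1411.7425 — 4 statements merged into one kernel-verified Lean document; each statement's English description precedes it below -/
import Mathlib

section
/- Let m ≥ 1, let M be a real (m+1)×m matrix, let r₁ < r₂ < r₃ be three of its row indices, and let d be one of its column indices. Writing M with hats for the matrix obtained by deleting the indicated rows (superscript hats for deleted columns), one has the 'jaw move' identity: det(M_{r̂₂}) · det(M_{r̂₁,r̂₃}^{d̂}) = det(M_{r̂₁}) · det(M_{r̂₂,r̂₃}^{d̂}) + det(M_{r̂₃}) · det(M_{r̂₁,r̂₂}^{d̂}). Here M_{r̂ᵢ} denotes the m×m matrix obtained from M by deleting row rᵢ, and M_{r̂ᵢ,r̂ⱼ}^{d̂} denotes the (m−1)×(m−1) matrix obtained by deleting rows rᵢ, rⱼ and column d. -/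
open Matrix

private lemma sa_val {n : ℕ} (p : Fin (n + 1)) (i : Fin n) :
    ((p.succAbove i : Fin (n + 1)) : ℕ) = if (i : ℕ) < (p : ℕ) then (i : ℕ) else (i : ℕ) + 1 := by
  rw [Fin.succAbove]
  split_ifs with h1 h2 h2 <;>
    simp_all [Fin.lt_def, Fin.coe_castSucc, Fin.val_succ]

/-- If `A` and `B` have the same rows, except that one row sits at slot `iA` in `A` and
at slot `iB` in `B` (all other rows appearing in the same order), then the determinants
agree up to the sign `(-1)^(iA+iB)`. -/
private lemma det_row_slide {s : ℕ} (A B : Matrix (Fin (s + 1)) (Fin (s + 1)) ℝ)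
    (iA iB : Fin (s + 1)) (hrow : ∀ j, A iA j = B iB j)
    (hrest : ∀ p j, A (iA.succAbove p) j = B (iB.succAbove p) j) :
    A.det = (-1) ^ ((iA : ℕ) + (iB : ℕ)) * B.det := by
  rw [Matrix.det_succ_row A iA, Matrix.det_succ_row B iB, Finset.mul_sum]
  refine Finset.sum_congr rfl fun j _ => ?_
  have hsub : A.submatrix iA.succAbove j.succAbove = B.submatrix iB.succAbove j.succAbove := by
    ext p q; simp [Matrix.submatrix_apply, hrest]
  rw [hsub, hrow]
  have hpow : (-1 : ℝ) ^ ((iA : ℕ) + (j : ℕ))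
      = (-1) ^ ((iA : ℕ) + (iB : ℕ)) * (-1) ^ ((iB : ℕ) + (j : ℕ)) := by
    rw [← pow_add]
    have h : (iA : ℕ) + (iB : ℕ) + ((iB : ℕ) + (j : ℕ))
        = (iA : ℕ) + (j : ℕ) + 2 * (iB : ℕ) := by omega
    rw [h]
    conv_rhs => rw [pow_add, pow_mul, neg_one_sq, one_pow, mul_one]
  rw [hpow]; ring

/-- The alternating sum of the maximal minors of an `(m+1) × m` matrix annihilates
every column of the matrix. -/
private lemma null_vec {k : ℕ} (M : Matrix (Fin (k + 2)) (Fin (k + 1)) ℝ) (c : Fin (k + 1)) :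
    ∑ i : Fin (k + 2), (-1 : ℝ) ^ (i : ℕ) * M i c * (M.submatrix i.succAbove id).det = 0 := by
  classical
  set N : Matrix (Fin (k + 2)) (Fin (k + 2)) ℝ :=
    Matrix.of (fun i j => Fin.cases (M i c) (fun j' => M i j') j) with hN
  have hdet : N.det = 0 := by
    rw [← Matrix.det_transpose]
    refine Matrix.det_zero_of_row_eq (i := c.succ) (j := 0) (Fin.succ_ne_zero c) ?_
    funext i
    simp [hN]
  have hexp := Matrix.det_succ_column_zero N
  rw [hdet] at hexp
  calc ∑ i : Fin (k + 2), (-1 : ℝ) ^ (i : ℕ) * M i c * (M.submatrix i.succAbove id).det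
      = ∑ i : Fin (k + 2), (-1 : ℝ) ^ (i : ℕ) * N i 0 * (N.submatrix i.succAbove Fin.succ).det := by
        refine Finset.sum_congr rfl fun i _ => ?_
        have h1 : N i 0 = M i c := by simp [hN]
        have h2 : N.submatrix i.succAbove Fin.succ = M.submatrix i.succAbove id := by
          ext p q; simp [hN]
        rw [h1, h2]
    _ = 0 := hexp.symm

set_option maxHeartbeats 1000000 in
/-- The "jaw move" determinant identity for a real `(m+1) × m` matrix (here `m = k+1 ≥ 1`).
For rows `r₁ < r₂ < r₃` and a column `d`, writing `M` with a deleted row (and possibly a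
deleted column `d`) via the order-preserving embeddings `Fin.succAbove`:
`det(M_{r̂₂}) · det(M_{r̂₁,r̂₃}^{d̂}) = det(M_{r̂₁}) · det(M_{r̂₂,r̂₃}^{d̂}) + det(M_{r̂₃}) · det(M_{r̂₁,r̂₂}^{d̂})`. -/
theorem jaw_move (k : ℕ) (M : Matrix (Fin (k + 2)) (Fin (k + 1)) ℝ)
    (r₁ r₂ r₃ : Fin (k + 2)) (h12 : r₁ < r₂) (h23 : r₂ < r₃) (d : Fin (k + 1)) :
    (M.submatrix r₂.succAbove id).det *
      (M.submatrix (r₃.succAbove ∘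
        (r₁.castLT (lt_of_lt_of_le (Fin.lt_def.mp (h12.trans h23))
          (Nat.lt_succ_iff.mp r₃.isLt))).succAbove) d.succAbove).det =
    (M.submatrix r₁.succAbove id).det *
      (M.submatrix (r₃.succAbove ∘
        (r₂.castLT (lt_of_lt_of_le (Fin.lt_def.mp h23)
          (Nat.lt_succ_iff.mp r₃.isLt))).succAbove) d.succAbove).det +
    (M.submatrix r₃.succAbove id).det *
      (M.submatrix (r₂.succAbove ∘
        (r₁.castLT (lt_of_lt_of_le (Fin.lt_def.mp h12)
          (Nat.lt_succ_iff.mp r₂.isLt))).succAbove) d.succAbove).det := by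
  have ha : (r₁ : ℕ) < (r₂ : ℕ) := Fin.lt_def.mp h12
  have hb : (r₂ : ℕ) < (r₃ : ℕ) := Fin.lt_def.mp h23
  rcases k with _ | s
  · exact absurd r₃.isLt (by omega)
  have hc : (r₃ : ℕ) < s + 3 := r₃.isLt
  -- the three order-preserving two-row-deletion embeddings
  have hr1 : (r₁ : ℕ) < s + 2 := by omega
  have hr2 : (r₂ : ℕ) < s + 2 := by omega
  set p1 : Fin (s + 2) := r₁.castLT hr1 with hp1
  set p2 : Fin (s + 2) := r₂.castLT hr2 with hp2
  set e13 : Fin (s + 1) → Fin (s + 3) := r₃.succAbove ∘ p1.succAbove with he13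
  set e23 : Fin (s + 1) → Fin (s + 3) := r₃.succAbove ∘ p2.succAbove with he23
  set e12 : Fin (s + 1) → Fin (s + 3) := r₂.succAbove ∘ p1.succAbove with he12
  have hv13 : ∀ x : Fin (s + 1), ((e13 x : Fin (s + 3)) : ℕ)
      = if (x : ℕ) < (r₁ : ℕ) then (x : ℕ)
        else if (x : ℕ) + 1 < (r₃ : ℕ) then (x : ℕ) + 1 else (x : ℕ) + 2 := by
    intro x
    simp only [he13, hp1, Function.comp_apply, sa_val, Fin.coe_castLT]
    split_ifs <;> omega
  have hv23 : ∀ x : Fin (s + 1), ((e23 x : Fin (s + 3)) : ℕ)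
      = if (x : ℕ) < (r₂ : ℕ) then (x : ℕ)
        else if (x : ℕ) + 1 < (r₃ : ℕ) then (x : ℕ) + 1 else (x : ℕ) + 2 := by
    intro x
    simp only [he23, hp2, Function.comp_apply, sa_val, Fin.coe_castLT]
    split_ifs <;> omega
  have hv12 : ∀ x : Fin (s + 1), ((e12 x : Fin (s + 3)) : ℕ)
      = if (x : ℕ) < (r₁ : ℕ) then (x : ℕ)
        else if (x : ℕ) + 1 < (r₂ : ℕ) then (x : ℕ) + 1 else (x : ℕ) + 2 := by
    intro x
    simp only [he12, hp1, Function.comp_apply, sa_val, Fin.coe_castLT]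
    split_ifs <;> omega
  -- distinguished slots
  obtain ⟨t, htv⟩ : ∃ x : Fin (s + 1), (x : ℕ) = (r₂ : ℕ) - 1 := ⟨⟨(r₂ : ℕ) - 1, by omega⟩, rfl⟩
  obtain ⟨j₁, hj₁v⟩ : ∃ x : Fin (s + 2), (x : ℕ) = (r₁ : ℕ) := ⟨⟨(r₁ : ℕ), by omega⟩, rfl⟩
  obtain ⟨j₃, hj₃v⟩ : ∃ x : Fin (s + 2), (x : ℕ) = (r₃ : ℕ) - 1 := ⟨⟨(r₃ : ℕ) - 1, by omega⟩, rfl⟩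
  obtain ⟨s₁, hs₁v⟩ : ∃ x : Fin (s + 1), (x : ℕ) = (r₁ : ℕ) := ⟨⟨(r₁ : ℕ), by omega⟩, rfl⟩
  obtain ⟨s₃, hs₃v⟩ : ∃ x : Fin (s + 1), (x : ℕ) = (r₃ : ℕ) - 2 := ⟨⟨(r₃ : ℕ) - 2, by omega⟩, rfl⟩
  have he13t : e13 t = r₂ := by
    apply Fin.ext; rw [hv13, htv]; split_ifs <;> omega
  have hsa1 : r₂.succAbove j₁ = r₁ := by
    apply Fin.ext; rw [sa_val, hj₁v]; split_ifs <;> omega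
  have hsa3 : r₂.succAbove j₃ = r₃ := by
    apply Fin.ext; rw [sa_val, hj₃v]; split_ifs <;> omega
  have he23s1 : e23 s₁ = r₁ := by
    apply Fin.ext; rw [hv23, hs₁v]; split_ifs <;> omega
  have he12s3 : e12 s₃ = r₃ := by
    apply Fin.ext; rw [hv12, hs₃v]; split_ifs <;> omega
  -- the matrix whose row `t` (holding the row `r₂` of `M`) we expand multilinearly
  set Q : Matrix (Fin (s + 1)) (Fin (s + 1)) ℝ := M.submatrix e13 d.succAbove with hQ
  set v : Fin (s + 2) → Fin (s + 1) → ℝ :=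
    fun j q => M (r₂.succAbove j) (d.succAbove q) with hv
  set coef : Fin (s + 2) → ℝ := fun j =>
    -((-1 : ℝ) ^ ((r₂ : ℕ) + ((r₂.succAbove j : Fin (s + 3)) : ℕ))
      * (M.submatrix (r₂.succAbove j).succAbove id).det) with hcoef
  -- Step A: the row `r₂` of `M`, scaled by `det (M minus row r₂)`, is a linear
  -- combination of the other rows of `M`.
  have hcomb : ((M.submatrix r₂.succAbove id).det • (Q t) : Fin (s + 1) → ℝ)
      = ∑ j : Fin (s + 2), coef j • v j := by
    funext q
    have h0 := null_vec M (d.succAbove q)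
    rw [Fin.sum_univ_succAbove
      (fun i => (-1 : ℝ) ^ (i : ℕ) * M i (d.succAbove q)
        * (M.submatrix i.succAbove id).det) r₂] at h0
    have hq : Q t q = M r₂ (d.succAbove q) := by
      rw [hQ]; show M (e13 t) (d.succAbove q) = _; rw [he13t]
    simp only [Pi.smul_apply, smul_eq_mul, Finset.sum_apply]
    rw [hq]
    have hsq : (-1 : ℝ) ^ ((r₂ : ℕ)) * (-1) ^ ((r₂ : ℕ)) = 1 := by
      rw [← pow_add]; exact Even.neg_one_pow ⟨(r₂ : ℕ), rfl⟩
    have hterm : ∀ j : Fin (s + 2), coef j * v j q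
        = -((-1 : ℝ) ^ ((r₂ : ℕ)) * ((-1 : ℝ) ^ (((r₂.succAbove j : Fin (s + 3))) : ℕ)
          * M (r₂.succAbove j) (d.succAbove q)
          * (M.submatrix (r₂.succAbove j).succAbove id).det)) := by
      intro j; simp only [hcoef, hv]; rw [pow_add]; ring
    rw [Finset.sum_congr rfl fun j _ => hterm j]
    rw [Finset.sum_neg_distrib, ← Finset.mul_sum]
    linear_combination (-(1 : ℝ)) ^ ((r₂ : ℕ)) * h0
      - (M r₂ (d.succAbove q) * (M.submatrix r₂.succAbove id).det) * hsq
  -- Step B: expand the determinant multilinearly in row `t`.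
  have hdetsum : (M.submatrix r₂.succAbove id).det * Q.det
      = ∑ j : Fin (s + 2), coef j * (Q.updateRow t (v j)).det := by
    have h1 : (M.submatrix r₂.succAbove id).det * Q.det
        = (Q.updateRow t ((M.submatrix r₂.succAbove id).det • (Q t))).det := by
      rw [Matrix.det_updateRow_smul, Matrix.updateRow_eq_self]
    rw [h1, hcomb]
    have h2 : (Q.updateRow t (∑ j : Fin (s + 2), coef j • v j)).det
        = ∑ j : Fin (s + 2), (Q.updateRow t (coef j • v j)).det :=
      (Matrix.detRowAlternating :
        (Fin (s + 1) → ℝ) [⋀^Fin (s + 1)]→ₗ[ℝ] ℝ).toMultilinearMap.map_update_sum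
        Finset.univ t (fun j => coef j • v j) Q
    rw [h2]
    exact Finset.sum_congr rfl fun j _ => Matrix.det_updateRow_smul Q t (coef j) (v j)
  -- Step C: all terms except `j₁` and `j₃` vanish (repeated rows).
  have hzero : ∀ j : Fin (s + 2), j ≠ j₁ → j ≠ j₃ → (Q.updateRow t (v j)).det = 0 := by
    intro j hj1 hj3
    have hne1 : (j : ℕ) ≠ (r₁ : ℕ) := by
      intro h; exact hj1 (Fin.ext (by rw [h, ← hj₁v]))
    have hne3 : (j : ℕ) ≠ (r₃ : ℕ) - 1 := by
      intro h; exact hj3 (Fin.ext (by rw [h, ← hj₃v]))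
    have hival : ((r₂.succAbove j : Fin (s + 3)) : ℕ)
        = if (j : ℕ) < (r₂ : ℕ) then (j : ℕ) else (j : ℕ) + 1 := sa_val r₂ j
    have hi1 : ((r₂.succAbove j : Fin (s + 3)) : ℕ) ≠ (r₁ : ℕ) := by
      rw [hival]; split_ifs <;> omega
    have hi2 : ((r₂.succAbove j : Fin (s + 3)) : ℕ) ≠ (r₂ : ℕ) := by
      rw [hival]; split_ifs <;> omega
    have hi3 : ((r₂.succAbove j : Fin (s + 3)) : ℕ) ≠ (r₃ : ℕ) := by
      rw [hival]; split_ifs <;> omega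
    have hilt : ((r₂.succAbove j : Fin (s + 3)) : ℕ) < s + 3 := (r₂.succAbove j).isLt
    set i : Fin (s + 3) := r₂.succAbove j with hi
    obtain ⟨x, hxv⟩ : ∃ x : Fin (s + 1), (x : ℕ) = if (i : ℕ) < (r₁ : ℕ) then (i : ℕ)
        else if (i : ℕ) < (r₃ : ℕ) then (i : ℕ) - 1 else (i : ℕ) - 2 :=
      ⟨⟨if (i : ℕ) < (r₁ : ℕ) then (i : ℕ)
        else if (i : ℕ) < (r₃ : ℕ) then (i : ℕ) - 1 else (i : ℕ) - 2, by split_ifs <;> omega⟩, rfl⟩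
    have hex : e13 x = i := by
      apply Fin.ext; rw [hv13, hxv]; split_ifs <;> omega
    have hxt : x ≠ t := by
      intro h
      have hvv := congrArg Fin.val h
      rw [hxv, htv] at hvv
      split_ifs at hvv <;> omega
    refine Matrix.det_zero_of_row_eq hxt ?_
    funext q
    rw [Matrix.updateRow_ne hxt, Matrix.updateRow_self]
    show M (e13 x) (d.succAbove q) = v j q
    rw [hex, hv]
  -- Step D: the two surviving terms, via the row-slide lemma.
  have hslide1 : (Q.updateRow t (v j₁)).det
      = (-1) ^ (((r₂ : ℕ) - 1) + (r₁ : ℕ)) * (M.submatrix e23 d.succAbove).det := by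
    have := det_row_slide (Q.updateRow t (v j₁)) (M.submatrix e23 d.succAbove) t s₁
      (fun q => by
        rw [Matrix.updateRow_self]
        show v j₁ q = M (e23 s₁) (d.succAbove q)
        simp only [hv]
        rw [hsa1, he23s1])
      (fun p q => by
        rw [Matrix.updateRow_ne (Fin.succAbove_ne t p)]
        show M (e13 (t.succAbove p)) (d.succAbove q) = M (e23 (s₁.succAbove p)) (d.succAbove q)
        congr 1
        apply Fin.ext
        rw [hv13, hv23, sa_val, sa_val, htv, hs₁v]
        split_ifs <;> omega)
    rw [htv, hs₁v] at this
    exact this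
  have hslide3 : (Q.updateRow t (v j₃)).det
      = (-1) ^ (((r₂ : ℕ) - 1) + ((r₃ : ℕ) - 2)) * (M.submatrix e12 d.succAbove).det := by
    have := det_row_slide (Q.updateRow t (v j₃)) (M.submatrix e12 d.succAbove) t s₃
      (fun q => by
        rw [Matrix.updateRow_self]
        show v j₃ q = M (e12 s₃) (d.succAbove q)
        simp only [hv]
        rw [hsa3, he12s3])
      (fun p q => by
        rw [Matrix.updateRow_ne (Fin.succAbove_ne t p)]
        show M (e13 (t.succAbove p)) (d.succAbove q) = M (e12 (s₃.succAbove p)) (d.succAbove q)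
        congr 1
        apply Fin.ext
        rw [hv13, hv12, sa_val, sa_val, htv, hs₃v]
        split_ifs <;> omega)
    rw [htv, hs₃v] at this
    exact this
  -- Step E: assemble.
  have hne : j₁ ≠ j₃ := by
    intro h
    have hvv := congrArg Fin.val h
    rw [hj₁v, hj₃v] at hvv
    omega
  have hsplit : ∑ j : Fin (s + 2), coef j * (Q.updateRow t (v j)).det
      = coef j₁ * (Q.updateRow t (v j₁)).det + coef j₃ * (Q.updateRow t (v j₃)).det := by
    refine Eq.trans (Finset.sum_subset
        (Finset.subset_univ ({j₁, j₃} : Finset (Fin (s + 2)))) ?_).symm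
      (Finset.sum_pair hne)
    intro x _ hx
    simp only [Finset.mem_insert, Finset.mem_singleton, not_or] at hx
    rw [hzero x hx.1 hx.2, mul_zero]
  have hcoef1 : coef j₁ = -((-1 : ℝ) ^ ((r₂ : ℕ) + (r₁ : ℕ))
      * (M.submatrix r₁.succAbove id).det) := by
    rw [hcoef]; simp only [hsa1]
  have hcoef3 : coef j₃ = -((-1 : ℝ) ^ ((r₂ : ℕ) + (r₃ : ℕ))
      * (M.submatrix r₃.succAbove id).det) := by
    rw [hcoef]; simp only [hsa3]
  have hsign1 : -((-1 : ℝ) ^ ((r₂ : ℕ) + (r₁ : ℕ)) * (-1) ^ (((r₂ : ℕ) - 1) + (r₁ : ℕ))) = 1 := by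
    rw [← pow_add]
    have h : (r₂ : ℕ) + (r₁ : ℕ) + (((r₂ : ℕ) - 1) + (r₁ : ℕ))
        = 2 * ((r₁ : ℕ) + (r₂ : ℕ) - 1) + 1 := by omega
    rw [h, pow_succ, pow_mul, neg_one_sq, one_pow, one_mul]
    norm_num
  have hsign3 : -((-1 : ℝ) ^ ((r₂ : ℕ) + (r₃ : ℕ))
      * (-1) ^ (((r₂ : ℕ) - 1) + ((r₃ : ℕ) - 2))) = 1 := by
    rw [← pow_add]
    have h : (r₂ : ℕ) + (r₃ : ℕ) + (((r₂ : ℕ) - 1) + ((r₃ : ℕ) - 2))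
        = 2 * ((r₂ : ℕ) + (r₃ : ℕ) - 2) + 1 := by omega
    rw [h, pow_succ, pow_mul, neg_one_sq, one_pow, one_mul]
    norm_num
  have hfinal : (M.submatrix r₂.succAbove id).det * (M.submatrix e13 d.succAbove).det
      = (M.submatrix r₁.succAbove id).det * (M.submatrix e23 d.succAbove).det
      + (M.submatrix r₃.succAbove id).det * (M.submatrix e12 d.succAbove).det := by
    rw [hdetsum, hsplit, hslide1, hslide3, hcoef1, hcoef3]
    linear_combination
      ((M.submatrix r₁.succAbove id).det * (M.submatrix e23 d.succAbove).det) * hsign1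
      + ((M.submatrix r₃.succAbove id).det * (M.submatrix e12 d.succAbove).det) * hsign3
  exact hfinal
end

section
/- Fix n ≥ 1 and two disjoint subsets A = {a_1 < a_2 < ⋯ < a_k} and B = {b_1 < b_2 < ⋯ < b_k} of {1,…,n}. Then the minor det((M_{a_i,b_j})_{1≤i,j≤k}) is a Laurent polynomial in the small central minors of M: there exist a finitely supported function e from the small-central-minor index set S = {(x,y) : 1 ≤ x ≤ 2n, and either 1 ≤ y < n/2, or y = n/2 and x+y is odd} to ℕ and a multivariate real polynomial p in variables (X_s)_{s∈S}, such that for every n×n real matrix M one has det((M_{a_i,b_j})_{i,j}) · ∏_{s∈S} CM_s(M)^{e(s)} = p((CM_s(M))_{s∈S}). -/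
/-- The contiguous minor `CM_{a,b,y}(M)` of an `n × n` matrix `M` (indexed by `ZMod n`,
i.e. indices are taken modulo `n`): the determinant of the `y × y` matrix whose rows are
`a, a+1, …, a+y-1` in order and whose columns are `b+y-1, …, b+1, b` in order. -/
noncomputable def contiguousMinor (n : ℕ) (M : Matrix (ZMod n) (ZMod n) ℝ)
    (a b : ℤ) (y : ℕ) : ℝ :=
  Matrix.det (Matrix.of fun i j : Fin y =>
    M (((a + (i : ℤ)) : ℤ) : ZMod n) (((b + (y : ℤ) - 1 - (j : ℤ)) : ℤ) : ZMod n))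

/-- The central minor `CM_{x,y}(M)`: the contiguous minor `CM_{a,b,y}(M)` with
`a = ⌊(x-y)/2⌋` and `b = ⌊(x-y+n-((n-1) mod 2))/2⌋`. -/
noncomputable def centralMinor (n : ℕ) (M : Matrix (ZMod n) (ZMod n) ℝ)
    (x : ℤ) (y : ℕ) : ℝ :=
  contiguousMinor n M (Int.fdiv (x - (y : ℤ)) 2)
    (Int.fdiv (x - (y : ℤ) + (n : ℤ) - (((n : ℤ) - 1) % 2)) 2) y

/-- The index set of the small central minors: pairs `(x,y)` with `1 ≤ x ≤ 2n` and
either `1 ≤ y < n/2`, or `y = n/2` and `x + y` odd. -/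
def SmallIdx (n : ℕ) : Set (ℤ × ℕ) :=
  {s | 1 ≤ s.1 ∧ s.1 ≤ 2 * (n : ℤ) ∧
    ((1 ≤ s.2 ∧ 2 * s.2 < n) ∨ (2 * s.2 = n ∧ Odd (s.1 + (s.2 : ℤ))))}

namespace CentralAux

/-- The key predicate: `f` is a Laurent polynomial in the small central minors,
in the sense of the target theorem. -/
def P (n : ℕ) (f : Matrix (ZMod n) (ZMod n) ℝ → ℝ) : Prop :=
  ∃ (e : (SmallIdx n) →₀ ℕ) (p : MvPolynomial (SmallIdx n) ℝ),
      ∀ M : Matrix (ZMod n) (ZMod n) ℝ,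
        f M * e.prod (fun s m => (centralMinor n M s.1.1 s.1.2) ^ m) =
          MvPolynomial.eval (fun s : SmallIdx n => centralMinor n M s.1.1 s.1.2) p

variable {n : ℕ}

lemma P_congr {f g : Matrix (ZMod n) (ZMod n) ℝ → ℝ} (h : ∀ M, f M = g M) (hf : P n f) :
    P n g := by
  obtain ⟨e, p, hp⟩ := hf
  exact ⟨e, p, fun M => by rw [← h M]; exact hp M⟩

lemma P_const (c : ℝ) : P n (fun _ => c) := by
  refine ⟨0, MvPolynomial.C c, fun M => ?_⟩
  rw [Finsupp.prod_zero_index, mul_one, MvPolynomial.eval_C]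

lemma prod_add_eq (e₁ e₂ : (SmallIdx n) →₀ ℕ) (M : Matrix (ZMod n) (ZMod n) ℝ) :
    (e₁ + e₂).prod (fun s m => (centralMinor n M s.1.1 s.1.2) ^ m) =
      e₁.prod (fun s m => (centralMinor n M s.1.1 s.1.2) ^ m) *
      e₂.prod (fun s m => (centralMinor n M s.1.1 s.1.2) ^ m) :=
  Finsupp.prod_add_index' (fun _ => pow_zero _) (fun _ _ _ => pow_add _ _ _)

lemma eval_monomial_eq (e : (SmallIdx n) →₀ ℕ) (M : Matrix (ZMod n) (ZMod n) ℝ) :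
    MvPolynomial.eval (fun s : SmallIdx n => centralMinor n M s.1.1 s.1.2)
      (MvPolynomial.monomial e (1:ℝ)) =
    e.prod (fun s m => (centralMinor n M s.1.1 s.1.2) ^ m) := by
  rw [MvPolynomial.eval_monomial, one_mul]

lemma P_mul {f g : Matrix (ZMod n) (ZMod n) ℝ → ℝ} (hf : P n f) (hg : P n g) :
    P n (fun M => f M * g M) := by
  obtain ⟨e₁, p₁, hp₁⟩ := hf
  obtain ⟨e₂, p₂, hp₂⟩ := hg
  refine ⟨e₁ + e₂, p₁ * p₂, fun M => ?_⟩
  rw [prod_add_eq, map_mul]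
  calc f M * g M * (e₁.prod _ * e₂.prod _)
      = (f M * e₁.prod _) * (g M * e₂.prod _) := by ring
    _ = _ := by rw [hp₁ M, hp₂ M]

lemma P_add {f g : Matrix (ZMod n) (ZMod n) ℝ → ℝ} (hf : P n f) (hg : P n g) :
    P n (fun M => f M + g M) := by
  obtain ⟨e₁, p₁, hp₁⟩ := hf
  obtain ⟨e₂, p₂, hp₂⟩ := hg
  refine ⟨e₁ + e₂, p₁ * MvPolynomial.monomial e₂ 1 + p₂ * MvPolynomial.monomial e₁ 1,
    fun M => ?_⟩
  rw [prod_add_eq, map_add, map_mul, map_mul, eval_monomial_eq, eval_monomial_eq]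
  calc (f M + g M) * (e₁.prod _ * e₂.prod _)
      = (f M * e₁.prod _) * e₂.prod _ + (g M * e₂.prod _) * e₁.prod _ := by ring
    _ = _ := by rw [hp₁ M, hp₂ M]

lemma P_sub {f g : Matrix (ZMod n) (ZMod n) ℝ → ℝ} (hf : P n f) (hg : P n g) :
    P n (fun M => f M - g M) := by
  have := P_add hf (P_mul (P_const (-1)) hg)
  exact P_congr (f := fun M => f M + (-1) * g M) (fun M => by ring) this

lemma P_finsum {ι : Type*} (s : Finset ι) (f : ι → Matrix (ZMod n) (ZMod n) ℝ → ℝ)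
    (h : ∀ i ∈ s, P n (f i)) : P n (fun M => ∑ i ∈ s, f i M) := by
  classical
  induction s using Finset.induction_on with
  | empty => exact P_congr (f := fun _ => (0:ℝ)) (fun M => by simp) (P_const 0)
  | @insert a s' hx ih =>
      have := P_add (h a (Finset.mem_insert_self a s'))
        (ih (fun i hi => h i (Finset.mem_insert_of_mem hi)))
      exact P_congr (fun M => by rw [Finset.sum_insert hx]) this

lemma P_finprod {ι : Type*} (s : Finset ι) (f : ι → Matrix (ZMod n) (ZMod n) ℝ → ℝ)
    (h : ∀ i ∈ s, P n (f i)) : P n (fun M => ∏ i ∈ s, f i M) := by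
  classical
  induction s using Finset.induction_on with
  | empty => exact P_congr (f := fun _ => (1:ℝ)) (fun M => by simp) (P_const 1)
  | @insert a s' hx ih =>
      have := P_mul (h a (Finset.mem_insert_self a s'))
        (ih (fun i hi => h i (Finset.mem_insert_of_mem hi)))
      exact P_congr (fun M => by rw [Finset.prod_insert hx]) this

lemma P_det {m : ℕ} (A : Matrix (ZMod n) (ZMod n) ℝ → Matrix (Fin m) (Fin m) ℝ)
    (h : ∀ i j, P n (fun M => A M i j)) : P n (fun M => (A M).det) := by
  have hdet : ∀ M, (A M).det =
      ∑ σ : Equiv.Perm (Fin m), ((Equiv.Perm.sign σ : ℤ) : ℝ) * ∏ i, A M (σ i) i :=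
    fun M => Matrix.det_apply' (A M)
  refine P_congr (fun M => (hdet M).symm) ?_
  refine P_finsum _ _ (fun σ _ => ?_)
  exact P_mul (P_const _) (P_finprod _ _ (fun i _ => h (σ i) i))

lemma P_central (s : SmallIdx n) : P n (fun M => centralMinor n M s.1.1 s.1.2) :=
  ⟨0, MvPolynomial.X s, fun M => by
    rw [Finsupp.prod_zero_index, mul_one, MvPolynomial.eval_X]⟩

lemma P_of_exists {g : Matrix (ZMod n) (ZMod n) ℝ → ℝ}
    (hg : ∃ s : SmallIdx n, ∀ M, centralMinor n M s.1.1 s.1.2 = g M) : P n g := by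
  obtain ⟨s, hs⟩ := hg
  exact P_congr hs (P_central s)

/-- Corner extraction: if `f * g = h` pointwise, `g` is a small central minor, and `h`
is Laurent, then `f` is Laurent. -/
lemma P_corner {f g h : Matrix (ZMod n) (ZMod n) ℝ → ℝ}
    (hfg : ∀ M, f M * g M = h M)
    (hg : ∃ s : SmallIdx n, ∀ M, centralMinor n M s.1.1 s.1.2 = g M)
    (hh : P n h) : P n f := by
  obtain ⟨s, hs⟩ := hg
  obtain ⟨e, p, hp⟩ := hh
  refine ⟨e + Finsupp.single s 1, p, fun M => ?_⟩
  rw [prod_add_eq, Finsupp.prod_single_index (by exact pow_zero _), pow_one]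
  calc f M * (e.prod _ * centralMinor n M s.1.1 s.1.2)
      = (f M * centralMinor n M s.1.1 s.1.2) * e.prod _ := by ring
    _ = (f M * g M) * e.prod _ := by rw [hs M]
    _ = h M * e.prod _ := by rw [hfg M]
    _ = _ := hp M


/-- `cPar n = n - ((n-1) mod 2)`, the shift appearing in `centralMinor`. -/
def cPar (n : ℕ) : ℤ := (n : ℤ) - (((n : ℤ) - 1) % 2)

/-- The central diagonal offset. -/
def dZero (n : ℕ) : ℤ := cPar n / 2

lemma cPar_facts [NeZero n] :
    cPar n = 2 * dZero n + 1 ∧ (n : ℤ) - 1 ≤ cPar n ∧ cPar n ≤ (n : ℤ) ∧ 0 ≤ dZero n ∧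
      2 * dZero n ≤ (n : ℤ) - 1 ∧ (n : ℤ) - 2 ≤ 2 * dZero n := by
  have hn : 1 ≤ n := Nat.pos_of_ne_zero (NeZero.ne n)
  have hn' : (1 : ℤ) ≤ (n : ℤ) := by exact_mod_cast hn
  unfold dZero cPar
  omega

lemma contiguousMinor_congr (M : Matrix (ZMod n) (ZMod n) ℝ) {a a' b b' : ℤ} (y : ℕ)
    (hab : ((a : ZMod n) = (a' : ZMod n))) (hbb : ((b : ZMod n) = (b' : ZMod n))) :
    contiguousMinor n M a b y = contiguousMinor n M a' b' y := by
  unfold contiguousMinor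
  congr 1
  ext i j
  simp only [Matrix.of_apply]
  push_cast
  rw [hab, hbb]

lemma centralMinor_eq (M : Matrix (ZMod n) (ZMod n) ℝ) (x : ℤ) (y : ℕ) :
    centralMinor n M x y = contiguousMinor n M ((x - (y:ℤ)) / 2) ((x - (y:ℤ) + cPar n) / 2) y := by
  unfold centralMinor cPar
  rw [Int.fdiv_eq_ediv_of_nonneg _ (by norm_num), Int.fdiv_eq_ediv_of_nonneg _ (by norm_num)]
  congr 1
  ring_nf

lemma intCast_emod_eq (t : ℤ) [NeZero n] : (((t % (n:ℤ)) : ℤ) : ZMod n) = (t : ZMod n) := by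
  conv_rhs => rw [← Int.mul_ediv_add_emod t (n:ℤ)]
  push_cast [ZMod.natCast_self]
  ring

lemma centralMinor_shift [NeZero n] (M : Matrix (ZMod n) (ZMod n) ℝ) (x : ℤ) (y : ℕ) :
    centralMinor n M (x + 2 * (n:ℤ)) y = centralMinor n M x y := by
  rw [centralMinor_eq, centralMinor_eq]
  have e1 : (x + 2*(n:ℤ) - (y:ℤ)) / 2 = (x - (y:ℤ)) / 2 + (n:ℤ) := by omega
  have e2 : (x + 2*(n:ℤ) - (y:ℤ) + cPar n) / 2 = (x - (y:ℤ) + cPar n) / 2 + (n:ℤ) := by omega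
  rw [e1, e2]
  apply contiguousMinor_congr
  · push_cast [ZMod.natCast_self]; ring
  · push_cast [ZMod.natCast_self]; ring

lemma exists_central_even [NeZero n] (y : ℕ) (hy1 : 1 ≤ y) (hy2 : 2 * y < n) (t : ℤ) :
    ∃ s : SmallIdx n, ∀ M, centralMinor n M s.1.1 s.1.2 =
      contiguousMinor n M t (t + dZero n) y := by
  have hn : 1 ≤ n := Nat.pos_of_ne_zero (NeZero.ne n)
  have hn' : (1 : ℤ) ≤ (n : ℤ) := by exact_mod_cast hn
  have hy2' : 2 * (y:ℤ) < (n:ℤ) := by exact_mod_cast hy2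
  obtain ⟨hco, hc1, hc2, hd0, hd1, hd2⟩ := cPar_facts (n := n)
  set t' : ℤ := t % (n : ℤ) with ht'def
  have h0 : 0 ≤ t' := Int.emod_nonneg t (by omega)
  have h1 : t' < (n:ℤ) := Int.emod_lt_of_pos t (by omega)
  have key : ∀ x : ℤ, x - (y:ℤ) = 2 * t' → ∀ M, centralMinor n M x y =
      contiguousMinor n M t (t + dZero n) y := by
    intro x hx M
    rw [centralMinor_eq]
    have e1 : (x - (y:ℤ)) / 2 = t' := by omega
    have e2 : (x - (y:ℤ) + cPar n) / 2 = t' + dZero n := by omega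
    rw [e1, e2]
    apply contiguousMinor_congr
    · rw [ht'def]; exact intCast_emod_eq t
    · push_cast
      rw [show ((t' : ℤ) : ZMod n) = (t : ZMod n) from intCast_emod_eq t]
  by_cases hx : 2 * t' + (y:ℤ) ≤ 2 * (n:ℤ)
  · refine ⟨⟨(2 * t' + (y:ℤ), y), ⟨by omega, by omega, Or.inl ⟨hy1, hy2⟩⟩⟩, ?_⟩
    exact key _ (by ring)
  · refine ⟨⟨(2 * t' + (y:ℤ) - 2*(n:ℤ), y), ⟨by omega, by omega, Or.inl ⟨hy1, hy2⟩⟩⟩, ?_⟩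
    intro M
    have := centralMinor_shift M (2 * t' + (y:ℤ) - 2*(n:ℤ)) y
    rw [show 2 * t' + (y:ℤ) - 2*(n:ℤ) + 2*(n:ℤ) = 2*t' + (y:ℤ) from by ring] at this
    show centralMinor n M (2 * t' + (y:ℤ) - 2*(n:ℤ)) y = _
    rw [← this]
    exact key _ (by ring) M

lemma exists_central_odd [NeZero n] (y : ℕ) (hy1 : 1 ≤ y) (hy2 : 2 * y ≤ n) (t : ℤ) :
    ∃ s : SmallIdx n, ∀ M, centralMinor n M s.1.1 s.1.2 =
      contiguousMinor n M t (t + dZero n + 1) y := by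
  have hn : 1 ≤ n := Nat.pos_of_ne_zero (NeZero.ne n)
  have hn' : (1 : ℤ) ≤ (n : ℤ) := by exact_mod_cast hn
  have hy2' : 2 * (y:ℤ) ≤ (n:ℤ) := by exact_mod_cast hy2
  obtain ⟨hco, hc1, hc2, hd0, hd1, hd2⟩ := cPar_facts (n := n)
  set t' : ℤ := t % (n : ℤ) with ht'def
  have h0 : 0 ≤ t' := Int.emod_nonneg t (by omega)
  have h1 : t' < (n:ℤ) := Int.emod_lt_of_pos t (by omega)
  have key : ∀ x : ℤ, x - (y:ℤ) = 2 * t' + 1 → ∀ M, centralMinor n M x y =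
      contiguousMinor n M t (t + dZero n + 1) y := by
    intro x hx M
    rw [centralMinor_eq]
    have e1 : (x - (y:ℤ)) / 2 = t' := by omega
    have e2 : (x - (y:ℤ) + cPar n) / 2 = t' + dZero n + 1 := by omega
    rw [e1, e2]
    apply contiguousMinor_congr
    · rw [ht'def]; exact intCast_emod_eq t
    · push_cast
      rw [show ((t' : ℤ) : ZMod n) = (t : ZMod n) from intCast_emod_eq t]
  have hmem : ∀ x : ℤ, Odd (x + (y:ℤ)) → 1 ≤ x → x ≤ 2 * (n:ℤ) →
      (x, y) ∈ SmallIdx n := by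
    intro x hodd hx1 hx2
    refine ⟨hx1, hx2, ?_⟩
    rcases Nat.lt_or_ge (2*y) n with h | h
    · exact Or.inl ⟨hy1, h⟩
    · have h2y : 2 * y = n := by omega
      refine Or.inr ⟨h2y, hodd⟩
  by_cases hx : 2 * t' + (y:ℤ) + 1 ≤ 2 * (n:ℤ)
  · refine ⟨⟨(2 * t' + (y:ℤ) + 1, y), hmem _ ⟨t' + (y:ℤ), by ring⟩ (by omega) (by omega)⟩, ?_⟩
    exact key _ (by ring)
  · refine ⟨⟨(2 * t' + (y:ℤ) + 1 - 2*(n:ℤ), y), hmem _ ⟨t' + (y:ℤ) - (n:ℤ), by ring⟩ (by omega) (by omega)⟩, ?_⟩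
    intro M
    have := centralMinor_shift M (2 * t' + (y:ℤ) + 1 - 2*(n:ℤ)) y
    rw [show 2 * t' + (y:ℤ) + 1 - 2*(n:ℤ) + 2*(n:ℤ) = 2*t' + (y:ℤ) + 1 from by ring] at this
    show centralMinor n M (2 * t' + (y:ℤ) + 1 - 2*(n:ℤ)) y = _
    rw [← this]
    exact key _ (by ring) M


def Known (n : ℕ) (y : ℕ) : Prop :=
  ∀ (r : ZMod n) (d : ℕ), 1 ≤ d → (d : ℤ) ≤ (n : ℤ) - 1 →
    dZero n + 1 - (y : ℤ) ≤ (d : ℤ) → (d : ℤ) ≤ dZero n + (y : ℤ) →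
    P n (fun M => M r (r + (d : ZMod n)))

lemma known_int [NeZero n] {y : ℕ} (H : Known n y) (u v : ℤ)
    (h1 : 1 ≤ v - u) (h2 : v - u ≤ (n : ℤ) - 1)
    (h3 : dZero n + 1 - (y : ℤ) ≤ v - u) (h4 : v - u ≤ dZero n + (y : ℤ)) :
    P n (fun M => M ((u : ZMod n)) ((v : ZMod n))) := by
  have hd : (((v - u).toNat : ℕ) : ℤ) = v - u := Int.toNat_of_nonneg (by omega)
  have hcast : ((v : ℤ) : ZMod n) = (u : ZMod n) + (((v - u).toNat : ℕ) : ZMod n) := by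
    rw [show ((((v - u).toNat : ℕ)) : ZMod n) = ((((v - u).toNat : ℕ) : ℤ) : ZMod n) from by
      push_cast; ring]
    rw [hd]
    push_cast
    ring
  have := H (u : ZMod n) (v - u).toNat (by omega) (by omega) (by omega) (by omega)
  refine P_congr (fun M => ?_) this
  rw [← hcast]

lemma contiguousMinor_one [NeZero n] (M : Matrix (ZMod n) (ZMod n) ℝ) (a b : ℤ) :
    contiguousMinor n M a b 1 = M ((a : ZMod n)) ((b : ZMod n)) := by
  unfold contiguousMinor
  rw [Matrix.det_fin_one]
  simp only [Matrix.of_apply]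
  have ea : (((a + (((0 : Fin 1)) : ℤ)) : ℤ) : ZMod n) = (a : ZMod n) := by
    push_cast [Fin.val_zero]; ring
  have eb : (((b + ((1 : ℕ) : ℤ) - 1 - (((0 : Fin 1)) : ℤ)) : ℤ) : ZMod n) = (b : ZMod n) := by
    push_cast [Fin.val_zero]; ring
  rw [ea, eb]

lemma known_one [NeZero n] : Known n 1 := by
  have hn : 1 ≤ n := Nat.pos_of_ne_zero (NeZero.ne n)
  have hn' : (1 : ℤ) ≤ (n : ℤ) := by exact_mod_cast hn
  obtain ⟨hco, hc1, hc2, hd0, hdd1, hdd2⟩ := cPar_facts (n := n)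
  intro r d hd1 hd2 h3 h4
  set t : ℤ := ((r.val : ℕ) : ℤ) with htdef
  have hr : ((t : ℤ) : ZMod n) = r := by
    rw [htdef]; push_cast; exact ZMod.natCast_rightInverse r
  have hdcast : ((d : ℕ) : ZMod n) = (((d : ℕ) : ℤ) : ZMod n) := by push_cast; ring
  rcases (by omega : (d : ℤ) = dZero n ∨ (d : ℤ) = dZero n + 1) with hc | hc
  · obtain ⟨s, hs⟩ := exists_central_even (n := n) 1 le_rfl (by omega) t
    refine P_congr (fun M => ?_) (P_central s)
    rw [hs M, contiguousMinor_one]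
    have : ((t + dZero n : ℤ) : ZMod n) = r + ((d : ℕ) : ZMod n) := by
      rw [hdcast, hc]; push_cast; rw [hr]
    rw [this, hr]
  · obtain ⟨s, hs⟩ := exists_central_odd (n := n) 1 le_rfl (by omega) t
    refine P_congr (fun M => ?_) (P_central s)
    rw [hs M, contiguousMinor_one]
    have : ((t + dZero n + 1 : ℤ) : ZMod n) = r + ((d : ℕ) : ZMod n) := by
      rw [hdcast, hc]; push_cast; rw [hr]; ring
    rw [this, hr]

lemma known_step [NeZero n] (y : ℕ) (hy : 1 ≤ y) (H : Known n y) : Known n (y + 1) := by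
  have hn : 1 ≤ n := Nat.pos_of_ne_zero (NeZero.ne n)
  have hn' : (1 : ℤ) ≤ (n : ℤ) := by exact_mod_cast hn
  obtain ⟨hco, hc1, hc2, hd0, hdd1, hdd2⟩ := cPar_facts (n := n)
  intro r d hd1' hd2' h3' h4'
  by_cases hold : dZero n + 1 - (y : ℤ) ≤ (d : ℤ) ∧ (d : ℤ) ≤ dZero n + (y : ℤ)
  · exact H r d hd1' hd2' hold.1 hold.2
  have hdcast : ((d : ℕ) : ZMod n) = (((d : ℕ) : ℤ) : ZMod n) := by push_cast; ring
  rcases (by omega : (d : ℤ) = dZero n + 1 + (y : ℤ) ∨ (d : ℤ) = dZero n - (y : ℤ))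
    with hUP | hDN
  · -- UP case: new diagonal dZero + 1 + y
    set t : ℤ := ((r.val : ℕ) : ℤ) with htdef
    have hr : ((t : ℤ) : ZMod n) = r := by
      rw [htdef]; push_cast; exact ZMod.natCast_rightInverse r
    have hyb : (y : ℤ) ≤ (n : ℤ) - 2 - dZero n := by omega
    set A : Matrix (ZMod n) (ZMod n) ℝ → Matrix (Fin (y + 1)) (Fin (y + 1)) ℝ :=
      fun M => Matrix.of fun i j : Fin (y + 1) =>
        M (((t + (i : ℤ)) : ℤ) : ZMod n)
          ((((t + dZero n + 1) + ((y + 1 : ℕ) : ℤ) - 1 - (j : ℤ)) : ℤ) : ZMod n) with hAdef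
    have hwindow : ∀ M, contiguousMinor n M t (t + dZero n + 1) (y + 1) = (A M).det :=
      fun M => rfl
    obtain ⟨sW, hsW⟩ := exists_central_odd (n := n) (y + 1) (by omega) (by omega) t
    obtain ⟨sC, hsC⟩ := exists_central_even (n := n) y hy (by omega) (t + 1)
    refine P_corner
      (g := fun M => ((A M).submatrix Fin.succ ((0 : Fin (y + 1)).succAbove)).det)
      (h := fun M => (A M).det - ∑ j : Fin y, (-1 : ℝ) ^ ((j : ℕ) + 1) * A M 0 (Fin.succ j) *
        ((A M).submatrix Fin.succ (Fin.succ j).succAbove).det) ?_ ⟨sC, ?_⟩ ?_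
    · intro M
      beta_reduce
      have hdet := Matrix.det_succ_row_zero (A M)
      rw [Fin.sum_univ_succ] at hdet
      simp only [Fin.val_zero, pow_zero, one_mul, Fin.val_succ] at hdet
      rw [hdet, add_sub_cancel_right]
      congr 1
      simp only [hAdef, Matrix.of_apply]
      have e1 : (((t + (((0 : Fin (y + 1))) : ℤ)) : ℤ) : ZMod n) = r := by
        push_cast [Fin.val_zero]; rw [hr]; ring
      have e2 : ((((t + dZero n + 1) + ((y + 1 : ℕ) : ℤ) - 1 - (((0 : Fin (y + 1))) : ℤ)) : ℤ) :
          ZMod n) = r + ((d : ℕ) : ZMod n) := by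
        rw [hdcast, hUP]; push_cast [Fin.val_zero]; rw [hr]; ring
      rw [e1, e2]
    · intro M
      rw [hsC M, Fin.succAbove_zero]
      unfold contiguousMinor
      congr 1
      ext i' j'
      simp only [Matrix.submatrix_apply, Matrix.of_apply, hAdef]
      have er : (t + 1 + ((i' : Fin y) : ℤ)) = (t + ((Fin.succ i' : Fin (y + 1)) : ℤ)) := by
        push_cast [Fin.val_succ]; ring
      have ec : ((t + 1 + dZero n) + ((y : ℕ) : ℤ) - 1 - ((j' : Fin y) : ℤ)) =
          ((t + dZero n + 1) + ((y + 1 : ℕ) : ℤ) - 1 - ((Fin.succ j' : Fin (y + 1)) : ℤ)) := by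
        push_cast [Fin.val_succ]; ring
      rw [er, ec]
    · refine P_sub (P_of_exists ⟨sW, fun M => (hsW M).trans (hwindow M)⟩) ?_
      refine P_finsum _ _ (fun j _ => ?_)
      have hj := j.isLt
      refine P_mul (P_mul (P_const _) ?_) ?_
      · refine P_congr (f := fun M => M (((t + (((0 : Fin (y + 1))) : ℤ)) : ℤ) : ZMod n)
          ((((t + dZero n + 1) + ((y + 1 : ℕ) : ℤ) - 1 - ((Fin.succ j : Fin (y + 1)) : ℤ)) : ℤ) :
            ZMod n)) (fun M => by simp only [hAdef, Matrix.of_apply]) ?_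
        apply known_int H
        all_goals push_cast [Fin.val_succ, Fin.val_zero]; omega
      · refine P_det _ (fun i' j' => ?_)
        have hi' := i'.isLt
        have hcb := ((Fin.succ j).succAbove j').isLt
        refine P_congr (f := fun M => M (((t + ((Fin.succ i' : Fin (y + 1)) : ℤ)) : ℤ) : ZMod n)
          ((((t + dZero n + 1) + ((y + 1 : ℕ) : ℤ) - 1 -
            (((Fin.succ j).succAbove j' : Fin (y + 1)) : ℤ)) : ℤ) : ZMod n))
          (fun M => by simp only [hAdef, Matrix.submatrix_apply, Matrix.of_apply]) ?_
        apply known_int H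
        all_goals push_cast [Fin.val_succ]; omega
  · -- DOWN case: new diagonal dZero - y
    set r' : ZMod n := r - ((y : ℕ) : ZMod n) with hr'def
    set t : ℤ := ((r'.val : ℕ) : ℤ) with htdef
    have hr : ((t : ℤ) : ZMod n) = r - ((y : ℕ) : ZMod n) := by
      rw [htdef]; push_cast; rw [hr'def] at *; exact ZMod.natCast_rightInverse r'
    have hyb : (y : ℤ) ≤ dZero n - 1 := by omega
    set A : Matrix (ZMod n) (ZMod n) ℝ → Matrix (Fin (y + 1)) (Fin (y + 1)) ℝ :=
      fun M => Matrix.of fun i j : Fin (y + 1) =>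
        M (((t + (i : ℤ)) : ℤ) : ZMod n)
          ((((t + dZero n) + ((y + 1 : ℕ) : ℤ) - 1 - (j : ℤ)) : ℤ) : ZMod n) with hAdef
    have hwindow : ∀ M, contiguousMinor n M t (t + dZero n) (y + 1) = (A M).det :=
      fun M => rfl
    obtain ⟨sW, hsW⟩ := exists_central_even (n := n) (y + 1) (by omega) (by omega) t
    obtain ⟨sC, hsC⟩ := exists_central_odd (n := n) y hy (by omega) t
    refine P_corner
      (g := fun M => ((A M).submatrix (Fin.last y).succAbove ((Fin.last y).succAbove)).det)
      (h := fun M => (A M).det - ∑ j : Fin y, (-1 : ℝ) ^ (y + (j : ℕ)) *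
        A M (Fin.last y) (Fin.castSucc j) *
        ((A M).submatrix (Fin.last y).succAbove (Fin.castSucc j).succAbove).det) ?_ ⟨sC, ?_⟩ ?_
    · intro M
      beta_reduce
      have hdet := Matrix.det_succ_row (A M) (Fin.last y)
      rw [Fin.sum_univ_castSucc] at hdet
      simp only [Fin.val_last, Fin.coe_castSucc] at hdet
      have hsign : ((-1 : ℝ)) ^ (y + y) = 1 := by
        rw [← two_mul, pow_mul]; norm_num
      rw [hsign, one_mul] at hdet
      rw [hdet, add_sub_cancel_left]
      congr 1
      simp only [hAdef, Matrix.of_apply]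
      have e1 : (((t + ((Fin.last y : Fin (y + 1)) : ℤ)) : ℤ) : ZMod n) = r := by
        push_cast [Fin.val_last]; rw [hr]; ring
      have e2 : ((((t + dZero n) + ((y + 1 : ℕ) : ℤ) - 1 - ((Fin.last y : Fin (y + 1)) : ℤ)) : ℤ) :
          ZMod n) = r + ((d : ℕ) : ZMod n) := by
        rw [hdcast, hDN]; push_cast [Fin.val_last]; rw [hr]; ring
      rw [e1, e2]
    · intro M
      rw [hsC M, Fin.succAbove_last]
      unfold contiguousMinor
      congr 1
      ext i' j'
      simp only [Matrix.submatrix_apply, Matrix.of_apply, hAdef]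
      have er : (t + ((i' : Fin y) : ℤ)) = (t + ((Fin.castSucc i' : Fin (y + 1)) : ℤ)) := by
        push_cast [Fin.coe_castSucc]; ring
      have ec : ((t + dZero n + 1) + ((y : ℕ) : ℤ) - 1 - ((j' : Fin y) : ℤ)) =
          ((t + dZero n) + ((y + 1 : ℕ) : ℤ) - 1 - ((Fin.castSucc j' : Fin (y + 1)) : ℤ)) := by
        push_cast [Fin.coe_castSucc]; ring
      rw [er, ec]
    · refine P_sub (P_of_exists ⟨sW, fun M => (hsW M).trans (hwindow M)⟩) ?_
      refine P_finsum _ _ (fun j _ => ?_)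
      have hj := j.isLt
      refine P_mul (P_mul (P_const _) ?_) ?_
      · refine P_congr (f := fun M => M (((t + ((Fin.last y : Fin (y + 1)) : ℤ)) : ℤ) : ZMod n)
          ((((t + dZero n) + ((y + 1 : ℕ) : ℤ) - 1 - ((Fin.castSucc j : Fin (y + 1)) : ℤ)) : ℤ) :
            ZMod n)) (fun M => by simp only [hAdef, Matrix.of_apply]) ?_
        apply known_int H
        all_goals push_cast [Fin.val_last, Fin.coe_castSucc]; omega
      · refine P_det _ (fun i' j' => ?_)
        have hi' := i'.isLt
        have hcb := ((Fin.castSucc j).succAbove j').isLt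
        refine P_congr (f := fun M =>
          M (((t + (((Fin.last y).succAbove i' : Fin (y + 1)) : ℤ)) : ℤ) : ZMod n)
          ((((t + dZero n) + ((y + 1 : ℕ) : ℤ) - 1 -
            (((Fin.castSucc j).succAbove j' : Fin (y + 1)) : ℤ)) : ℤ) : ZMod n))
          (fun M => by simp only [hAdef, Matrix.submatrix_apply, Matrix.of_apply]) ?_
        apply known_int H
        all_goals push_cast [Fin.succAbove_last, Fin.coe_castSucc]; omega

lemma known_all [NeZero n] (y : ℕ) (hy : 1 ≤ y) : Known n y := by
  induction y with
  | zero => omega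
  | succ m ih =>
      rcases Nat.eq_or_lt_of_le hy with h | h
      · rw [← h] at *
        exact fun r d h1 h2 h3 h4 => known_one r d h1 h2 h3 h4
      · exact known_step m (by omega) (ih (by omega))

end CentralAux

/-- For disjoint subsets `A = {a₁ < ⋯ < a_k}` and `B = {b₁ < ⋯ < b_k}` of the index set,
the minor `det((M_{aᵢ,bⱼ})ᵢⱼ)` is a Laurent polynomial in the small central minors:
there are a finitely supported exponent function `e` and a polynomial `p` such that, for
every `n × n` real matrix `M`,
`det((M_{aᵢ,bⱼ})) · ∏ CM_s(M)^{e(s)} = p((CM_s(M))_s)`. -/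
theorem minor_laurent_in_small_central_minors (n k : ℕ) [NeZero n]
    (a b : Fin k → Fin n) (ha : StrictMono a) (hb : StrictMono b)
    (hdisj : ∀ i j : Fin k, a i ≠ b j) :
    ∃ (e : (SmallIdx n) →₀ ℕ) (p : MvPolynomial (SmallIdx n) ℝ),
      ∀ M : Matrix (ZMod n) (ZMod n) ℝ,
        Matrix.det (Matrix.of fun i j : Fin k =>
            M (((a i : ℕ) : ZMod n)) (((b j : ℕ) : ZMod n))) *
          e.prod (fun s m => (centralMinor n M s.1.1 s.1.2) ^ m) =
          MvPolynomial.eval (fun s : SmallIdx n => centralMinor n M s.1.1 s.1.2) p := by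
  classical
  have hn : 1 ≤ n := Nat.pos_of_ne_zero (NeZero.ne n)
  obtain ⟨hco, hc1, hc2, hd0, hdd1, hdd2⟩ := CentralAux.cPar_facts (n := n)
  have hP : CentralAux.P n (fun M => Matrix.det (Matrix.of fun i j : Fin k =>
      M (((a i : ℕ) : ZMod n)) (((b j : ℕ) : ZMod n)))) := by
    apply CentralAux.P_det
    intro i j
    set r₁ : ZMod n := ((a i : ℕ) : ZMod n) with hr₁
    set r₂ : ZMod n := ((b j : ℕ) : ZMod n) with hr₂
    have hne : r₁ ≠ r₂ := by
      intro h
      apply hdisj i j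
      have hv : (a i : ℕ) = (b j : ℕ) := by
        have := congrArg ZMod.val h
        rwa [hr₁, hr₂, ZMod.val_cast_of_lt (a i).isLt, ZMod.val_cast_of_lt (b j).isLt] at this
      exact Fin.ext hv
    set δ : ZMod n := r₂ - r₁ with hδ
    have hδ0 : δ ≠ 0 := sub_ne_zero_of_ne (Ne.symm hne)
    set d : ℕ := δ.val with hd
    have hd1 : 1 ≤ d := by
      rcases Nat.eq_zero_or_pos d with h | h
      · exact absurd ((ZMod.val_eq_zero δ).mp h) hδ0
      · exact h
    have hdlt : d < n := ZMod.val_lt δ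
    have hcastδ : ((d : ℕ) : ZMod n) = δ := ZMod.natCast_rightInverse δ
    have hfun : ∀ M : Matrix (ZMod n) (ZMod n) ℝ,
        M r₁ (r₁ + ((d : ℕ) : ZMod n)) = (Matrix.of fun i' j' : Fin k =>
          M (((a i' : ℕ) : ZMod n)) (((b j' : ℕ) : ZMod n))) i j := by
      intro M
      simp only [Matrix.of_apply]
      rw [hcastδ]
      congr 1
      rw [hδ]; ring
    refine CentralAux.P_congr hfun ?_
    have := CentralAux.known_all (n := n) n hn r₁ d hd1 (by omega) (by omega) (by omega)
    exact this
  obtain ⟨e, p, hp⟩ := hP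
  exact ⟨e, p, fun M => hp M⟩
end

section
/- Let M be a symmetric n×n real matrix. If n is odd, then for all integers x and all y with 0 ≤ y ≤ n, the central minors satisfy CM_{x+n,y}(M) = CM_{x,y}(M). The same equality CM_{x+n,y}(M) = CM_{x,y}(M) also holds when n is even and x + y is odd. -/
/-- Shifting the column start `b` by `n` does not change the contiguous minor. -/
lemma contiguousMinor_add_right (n : ℕ) (M : Matrix (ZMod n) (ZMod n) ℝ)
    (a b : ℤ) (y : ℕ) : contiguousMinor n M a (b + n) y = contiguousMinor n M a b y := by
  unfold contiguousMinor
  congr 1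
  ext i j
  simp only [Matrix.of_apply]
  have : ((b + (n : ℤ) + (y : ℤ) - 1 - (j : ℤ) : ℤ) : ZMod n)
      = ((b + (y : ℤ) - 1 - (j : ℤ) : ℤ) : ZMod n) := by
    push_cast
    simp only [ZMod.natCast_self]
    ring
  rw [this]

/-- For symmetric `M`, swapping `a` and `b` does not change the contiguous minor. -/
lemma contiguousMinor_symm (n : ℕ) (M : Matrix (ZMod n) (ZMod n) ℝ) (hM : M.IsSymm)
    (a b : ℤ) (y : ℕ) : contiguousMinor n M b a y = contiguousMinor n M a b y := by
  unfold contiguousMinor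
  have key : (Matrix.of fun i j : Fin y =>
        M (((b + (i : ℤ)) : ℤ) : ZMod n) (((a + (y : ℤ) - 1 - (j : ℤ)) : ℤ) : ZMod n))
      = Matrix.submatrix
        (Matrix.transpose (Matrix.of fun i j : Fin y =>
          M (((a + (i : ℤ)) : ℤ) : ZMod n) (((b + (y : ℤ) - 1 - (j : ℤ)) : ℤ) : ZMod n)))
        Fin.revPerm Fin.revPerm := by
    ext i j
    simp only [Matrix.submatrix_apply, Matrix.transpose_apply, Matrix.of_apply,
      Fin.revPerm_apply]
    rw [hM.apply]
    congr 2
    · push_cast [Fin.val_rev]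
      omega
    · push_cast [Fin.val_rev]
      omega
  rw [key, Matrix.det_submatrix_equiv_self, Matrix.det_transpose]

/-- For a symmetric `n × n` real matrix `M`, if `n` is odd, or if `n` is even and
`x + y` is odd, then `CM_{x+n,y}(M) = CM_{x,y}(M)` for all integers `x` and all
`0 ≤ y ≤ n`. -/
theorem centralMinor_shift_of_symm (n : ℕ) [NeZero n]
    (M : Matrix (ZMod n) (ZMod n) ℝ) (hM : M.IsSymm)
    (x : ℤ) (y : ℕ) (hy : y ≤ n)
    (h : Odd n ∨ (Even n ∧ Odd (x + (y : ℤ)))) :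
    centralMinor n M (x + (n : ℤ)) y = centralMinor n M x y := by
  have hpar : (n : ℤ) % 2 = 1 ∨ ((n : ℤ) % 2 = 0 ∧ (x + (y : ℤ)) % 2 = 1) := by
    rcases h with ⟨k, hk⟩ | ⟨⟨k, hk⟩, ⟨m, hm⟩⟩
    · left
      have hn : (n : ℤ) = 2 * (k : ℤ) + 1 := by exact_mod_cast hk
      omega
    · right
      have hn : (n : ℤ) = (k : ℤ) + (k : ℤ) := by exact_mod_cast hk
      constructor
      · omega
      · omega
  have h1 : Int.fdiv (x + (n : ℤ) - (y : ℤ)) 2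
      = Int.fdiv (x - (y : ℤ) + (n : ℤ) - (((n : ℤ) - 1) % 2)) 2 := by
    rw [Int.fdiv_eq_ediv_of_nonneg _ (by norm_num), Int.fdiv_eq_ediv_of_nonneg _ (by norm_num)]
    omega
  have h2 : Int.fdiv (x + (n : ℤ) - (y : ℤ) + (n : ℤ) - (((n : ℤ) - 1) % 2)) 2
      = Int.fdiv (x - (y : ℤ)) 2 + n := by
    rw [Int.fdiv_eq_ediv_of_nonneg _ (by norm_num), Int.fdiv_eq_ediv_of_nonneg _ (by norm_num)]
    omega
  unfold centralMinor
  rw [h1, h2, contiguousMinor_add_right, contiguousMinor_symm n M hM]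
end

section
/- Fix n ≥ 1 and integers x, y with 1 ≤ y, and suppose that either 2y < n, or 2y = n and x + y is odd. Let a = ⌊(x−y)/2⌋ and b = ⌊(x−y+n−((n−1) mod 2))/2⌋. Then the row index set {a, a+1, …, a+y−1} and the column index set {b, b+1, …, b+y−1} of the central minor CM_{x,y}, both taken as subsets of the residues modulo n, are disjoint. -/
/-- For `n ≥ 1` and integers `x, y` with `1 ≤ y` and either `2y < n`, or `2y = n` and
`x + y` odd, the row index set `{a, a+1, …, a+y-1}` and the column index set
`{b, b+1, …, b+y-1}` of the central minor `CM_{x,y}`, taken as subsets of the residues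
modulo `n`, are disjoint.  Here `a = ⌊(x-y)/2⌋` and `b = ⌊(x-y+n-((n-1) mod 2))/2⌋`. -/
theorem centralMinor_row_col_disjoint (n : ℕ) [NeZero n] (x : ℤ) (y : ℕ) (hy : 1 ≤ y)
    (h : 2 * y < n ∨ (2 * y = n ∧ Odd (x + (y : ℤ)))) :
    ∀ i j : Fin y,
      ((Int.fdiv (x - (y : ℤ)) 2 + (i : ℤ) : ℤ) : ZMod n) ≠
      ((Int.fdiv (x - (y : ℤ) + (n : ℤ) - (((n : ℤ) - 1) % 2)) 2 + (j : ℤ) : ℤ) : ZMod n) := by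
  intro i j hEq
  have hfd : ∀ m : ℤ, Int.fdiv m 2 = m / 2 := fun m => Int.fdiv_eq_ediv_of_nonneg m (by norm_num)
  rw [hfd, hfd] at hEq
  have hmod := (ZMod.intCast_eq_intCast_iff _ _ _).mp hEq
  have hdvd : (n : ℤ) ∣ ((x - (y : ℤ) + (n : ℤ) - (((n : ℤ) - 1) % 2)) / 2 + (j : ℤ))
      - ((x - (y : ℤ)) / 2 + (i : ℤ)) := hmod.dvd
  set q : ℤ := ((x - (y : ℤ) + (n : ℤ) - (((n : ℤ) - 1) % 2)) / 2 + (j : ℤ))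
      - ((x - (y : ℤ)) / 2 + (i : ℤ)) with hq
  have hi : (i : ℤ) < y := by exact_mod_cast i.isLt
  have hj : (j : ℤ) < y := by exact_mod_cast j.isLt
  have hi0 : 0 ≤ (i : ℤ) := Int.ofNat_nonneg _
  have hj0 : 0 ≤ (j : ℤ) := Int.ofNat_nonneg _
  have h' : 2 * (y : ℤ) < n ∨ (2 * (y : ℤ) = n ∧ (x + (y : ℤ)) % 2 = 1) := by
    rcases h with h1 | ⟨h1, h2⟩
    · left; exact_mod_cast h1
    · right; exact ⟨by exact_mod_cast h1, Int.odd_iff.mp h2⟩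
  have hy' : (1 : ℤ) ≤ y := by exact_mod_cast hy
  have hpos : 0 < q := by omega
  have hlt : q < n := by omega
  have := Int.le_of_dvd hpos hdvd
  omega
end
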